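/- Let r ≥ 0, let X and Y be finite quasimetric spaces, let M be an r-minimal model of X and N an r-minimal model of Y. Then X and Y are r-homotopy equivalent if and only if M and N are isometric (there is a distance-preserving bijection M → N). -/

import Mathlib

open scoped ENNReal

class QuasiMetric (X : Type*) where
  qdist : X → X → ℝ≥0∞
  qdist_triangle : ∀ x y z : X, qdist x z ≤ qdist x y + qdist y z
  qdist_eq_zero_iff : ∀ x y : X, qdist x y = 0 ↔ x = y

open QuasiMetric

instance {X : Type*} [QuasiMetric X] (A : Set X) : QuasiMetric A where
  qdist a b := qdist a.1 b.1
  qdist_triangle a b c := qdist_triangle a.1 b.1 c.1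
  qdist_eq_zero_iff a b := (qdist_eq_zero_iff a.1 b.1).trans Subtype.coe_inj

/-- A map of quasimetric spaces is short (1-Lipschitz). -/
def IsShort {X Y : Type*} [QuasiMetric X] [QuasiMetric Y] (f : X → Y) : Prop :=
  ∀ x x' : X, qdist (f x) (f x') ≤ qdist x x'

/-- The distance `d(f,g) = sup_x d(f x, g x)` on maps. -/
noncomputable def mapDist {X Y : Type*} [QuasiMetric X] [QuasiMetric Y] (f g : X → Y) : ℝ≥0∞ :=
  ⨆ x : X, qdist (f x) (g x)

/-- Two short maps are `r`-homotopic if they are connected by a chain of short maps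
in which each consecutive pair is at distance `≤ r` in one direction or the other. -/
def MapHomotopic {X Y : Type*} [QuasiMetric X] [QuasiMetric Y] (r : ℝ) (f g : X → Y) : Prop :=
  Relation.ReflTransGen
    (fun u v : X → Y => IsShort u ∧ IsShort v ∧
      (mapDist u v ≤ ENNReal.ofReal r ∨ mapDist v u ≤ ENNReal.ofReal r)) f g

/-- `A ⊆ X` is an `r`-deformation retract of `X`. -/
def IsDefRetract {X : Type*} [QuasiMetric X] (r : ℝ) (A : Set X) : Prop :=
  ∃ ρ : X → A, IsShort ρ ∧ (∀ a : A, ρ (a : X) = a) ∧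
    MapHomotopic r (fun x => (ρ x : X)) id

/-- A quasimetric space is `r`-minimal if it has no proper `r`-deformation retract. -/
def RMinimal (r : ℝ) (X : Type*) [QuasiMetric X] : Prop :=
  ∀ A : Set X, IsDefRetract r A → A = Set.univ

/-- A distance-preserving bijection. -/
def IsIsometry {X Y : Type*} [QuasiMetric X] [QuasiMetric Y] (f : X → Y) : Prop :=
  Function.Bijective f ∧ ∀ x x' : X, qdist (f x) (f x') = qdist x x'

/-- Two quasimetric spaces are `r`-homotopy equivalent. -/
def RHomotopyEquivalent (r : ℝ) (X Y : Type*) [QuasiMetric X] [QuasiMetric Y] : Prop :=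
  ∃ f : X → Y, ∃ g : Y → X, IsShort f ∧ IsShort g ∧
    MapHomotopic r (g ∘ f) id ∧ MapHomotopic r (f ∘ g) id

section Aux

variable {W X Y Z : Type*} [QuasiMetric W] [QuasiMetric X] [QuasiMetric Y] [QuasiMetric Z]

lemma isShort_id : IsShort (id : X → X) := fun _ _ => le_rfl

lemma IsShort.comp {g : Y → Z} {f : X → Y} (hg : IsShort g) (hf : IsShort f) :
    IsShort (g ∘ f) := fun x x' => (hg _ _).trans (hf x x')

lemma isShort_iterate {h : X → X} (hh : IsShort h) : ∀ n, IsShort (h^[n])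
  | 0 => isShort_id
  | (n + 1) => by
      rw [Function.iterate_succ]
      exact (isShort_iterate hh n).comp hh

lemma mapDist_comp_le {a : Y → Z} (ha : IsShort a) (b : W → X) (u v : X → Y) :
    mapDist (a ∘ u ∘ b) (a ∘ v ∘ b) ≤ mapDist u v := by
  refine iSup_le fun w => ?_
  exact (ha _ _).trans (le_iSup (fun x => qdist (u x) (v x)) (b w))

lemma MapHomotopic.comp {r : ℝ} {u v : X → Y} (h : MapHomotopic r u v)
    {a : Y → Z} {b : W → X} (ha : IsShort a) (hb : IsShort b) :
    MapHomotopic r (a ∘ u ∘ b) (a ∘ v ∘ b) := by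
  induction h with
  | refl => exact Relation.ReflTransGen.refl
  | tail _ hstep ih =>
      refine ih.tail ⟨ha.comp (hstep.1.comp hb), ha.comp (hstep.2.1.comp hb), ?_⟩
      exact hstep.2.2.imp (fun h' => (mapDist_comp_le ha b _ _).trans h')
        (fun h' => (mapDist_comp_le ha b _ _).trans h')

lemma MapHomotopic.trans' {r : ℝ} {u v w : X → Y} (h1 : MapHomotopic r u v)
    (h2 : MapHomotopic r v w) : MapHomotopic r u w :=
  Relation.ReflTransGen.trans h1 h2

lemma iterate_homotopic {r : ℝ} {h : X → X} (hs : IsShort h)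
    (h1 : MapHomotopic r h id) : ∀ n, MapHomotopic r (h^[n]) id
  | 0 => by rw [Function.iterate_zero]; exact Relation.ReflTransGen.refl
  | (n + 1) => by
      have h2 := (iterate_homotopic hs h1 n).comp hs isShort_id
      have h3 : MapHomotopic r (h ∘ h^[n]) h := by
        simpa [Function.comp_def] using h2
      rw [Function.iterate_succ']
      exact h3.trans' h1

lemma iterate_stab {h : X → X} {i p : ℕ} (he : h^[i + p] = h^[i]) :
    ∀ m, i ≤ m → ∀ k, h^[m + k * p] = h^[m] := by
  have one : ∀ m, i ≤ m → h^[m + p] = h^[m] := by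
    intro m hm
    obtain ⟨t, rfl⟩ := Nat.exists_eq_add_of_le hm
    calc h^[i + t + p] = h^[t + (i + p)] := by ring_nf
      _ = h^[t] ∘ h^[i + p] := Function.iterate_add h t (i + p)
      _ = h^[t] ∘ h^[i] := by rw [he]
      _ = h^[t + i] := (Function.iterate_add h t i).symm
      _ = h^[i + t] := by ring_nf
  intro m hm k
  induction k with
  | zero => simp
  | succ k ih =>
      have : m + (k + 1) * p = (m + k * p) + p := by ring
      rw [this, one (m + k * p) (le_trans hm (Nat.le_add_right m _)), ih]

lemma exists_idem' [Finite X] (h : X → X) : ∃ n, 0 < n ∧ h^[n] ∘ h^[n] = h^[n] := by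
  obtain ⟨i, j, hne, heq⟩ := Finite.exists_ne_map_eq_of_infinite (fun n : ℕ => h^[n])
  wlog hij : i < j generalizing i j
  · exact this j i hne.symm heq.symm (by omega)
  set p := j - i with hp
  have hp0 : 0 < p := by omega
  have he : h^[i + p] = h^[i] := by
    rw [show i + p = j by omega]; exact heq.symm
  refine ⟨(i + 1) * p, by positivity, ?_⟩
  have key := iterate_stab he ((i + 1) * p) (by nlinarith) (i + 1)
  rw [← Function.iterate_add]
  exact key

lemma rminimal_self_bij {M : Type*} [QuasiMetric M] [Finite M] {r : ℝ}
    (hmin : RMinimal r M) {h : M → M} (hs : IsShort h) (hh : MapHomotopic r h id) :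
    Function.Bijective h := by
  obtain ⟨n, hn, hidem⟩ := exists_idem' h
  set e := h^[n] with hedef
  have hes : IsShort e := isShort_iterate hs n
  have heh : MapHomotopic r e id := iterate_homotopic hs hh n
  set A : Set M := Set.range e with hA
  have hret : IsDefRetract r A := by
    refine ⟨fun x => ⟨e x, Set.mem_range_self x⟩, ?_, ?_, ?_⟩
    · intro x x'; exact hes x x'
    · rintro ⟨a, y, rfl⟩
      exact Subtype.ext (congrFun hidem y)
    · exact heh
  have hAuniv := hmin A hret
  have hesurj : Function.Surjective e := by
    intro y
    have : y ∈ A := hAuniv ▸ Set.mem_univ y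
    exact this
  have hsurj : Function.Surjective h := by
    obtain ⟨m, rfl⟩ : ∃ m, n = m + 1 := ⟨n - 1, by omega⟩
    intro y
    obtain ⟨x, hx⟩ := hesurj y
    refine ⟨h^[m] x, ?_⟩
    calc h (h^[m] x) = h^[m + 1] x := (Function.iterate_succ_apply' h m x).symm
      _ = y := hx
  exact Finite.surjective_iff_bijective.mp hsurj

lemma short_bij_expand {M : Type*} [QuasiMetric M] [Finite M] {h : M → M}
    (hs : IsShort h) (hb : Function.Bijective h) :
    ∀ x x', qdist x x' ≤ qdist (h x) (h x') := by
  obtain ⟨i, j, hne, heq⟩ := Finite.exists_ne_map_eq_of_infinite (fun n : ℕ => h^[n])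
  wlog hij : i < j generalizing i j
  · exact this j i hne.symm heq.symm (by omega)
  have hkid : h^[j - i] = id := by
    funext x
    obtain ⟨y, rfl⟩ := (hb.iterate i).surjective x
    have : h^[j - i] (h^[i] y) = h^[(j - i) + i] y :=
      (Function.iterate_add_apply h (j - i) i y).symm
    rw [this, show (j - i) + i = j by omega]
    exact (congrFun heq y).symm
  obtain ⟨m, hm⟩ : ∃ m, j - i = m + 1 := ⟨j - i - 1, by omega⟩
  have hsm : IsShort (h^[m]) := isShort_iterate hs m
  intro x x'
  calc qdist x x' = qdist (h^[j - i] x) (h^[j - i] x') := by rw [hkid]; rfl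
    _ = qdist (h^[m] (h x)) (h^[m] (h x')) := by
          rw [hm, Function.iterate_succ_apply, Function.iterate_succ_apply]
    _ ≤ qdist (h x) (h x') := hsm _ _

lemma RHomotopyEquivalent.symm' {r : ℝ} (h : RHomotopyEquivalent r X Y) :
    RHomotopyEquivalent r Y X := by
  obtain ⟨f, g, hf, hg, h1, h2⟩ := h
  exact ⟨g, f, hg, hf, h2, h1⟩

lemma RHomotopyEquivalent.trans' {r : ℝ} (h : RHomotopyEquivalent r X Y)
    (h' : RHomotopyEquivalent r Y Z) : RHomotopyEquivalent r X Z := by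
  obtain ⟨f1, g1, hf1, hg1, h1, h1'⟩ := h
  obtain ⟨f2, g2, hf2, hg2, h2, h2'⟩ := h'
  refine ⟨f2 ∘ f1, g1 ∘ g2, hf2.comp hf1, hg1.comp hg2, ?_, ?_⟩
  · have h3 := h2.comp hg1 hf1
    have h4 : MapHomotopic r ((g1 ∘ g2) ∘ f2 ∘ f1) (g1 ∘ f1) := by
      simpa [Function.comp_def] using h3
    exact h4.trans' h1
  · have h3 := h1'.comp hf2 hg2
    have h4 : MapHomotopic r ((f2 ∘ f1) ∘ g1 ∘ g2) (f2 ∘ g2) := by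
      simpa [Function.comp_def] using h3
    exact h4.trans' h2'

lemma isometry_rhe {r : ℝ} {f : X → Y} (hf : IsIsometry f) :
    RHomotopyEquivalent r X Y := by
  obtain ⟨hb, hd⟩ := hf
  let eqv := Equiv.ofBijective f hb
  have happ : ∀ y, f (eqv.symm y) = y := fun y => eqv.apply_symm_apply y
  refine ⟨f, fun y => eqv.symm y, fun x x' => (hd x x').le, ?_, ?_, ?_⟩
  · intro y y'
    refine le_of_eq ?_
    calc qdist (eqv.symm y) (eqv.symm y') = qdist (f (eqv.symm y)) (f (eqv.symm y')) :=
          (hd _ _).symm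
      _ = qdist y y' := by rw [happ, happ]
  · have : (fun y => eqv.symm y) ∘ f = id := funext fun x => eqv.symm_apply_apply x
    rw [this]
    exact Relation.ReflTransGen.refl
  · have : f ∘ (fun y => eqv.symm y) = id := funext fun y => happ y
    rw [this]
    exact Relation.ReflTransGen.refl

lemma min_equiv_isometry {M N : Type*} [QuasiMetric M] [QuasiMetric N]
    [Finite M] [Finite N] {r : ℝ} (hM : RMinimal r M) (hN : RMinimal r N)
    (he : RHomotopyEquivalent r M N) : ∃ f : M → N, IsIsometry f := by
  obtain ⟨f, g, hf, hg, hgf, hfg⟩ := he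
  have hbgf : Function.Bijective (g ∘ f) := rminimal_self_bij hM (hg.comp hf) hgf
  have hbfg : Function.Bijective (f ∘ g) := rminimal_self_bij hN (hf.comp hg) hfg
  have hfinj : Function.Injective f := fun x y hxy =>
    hbgf.injective (show g (f x) = g (f y) by rw [hxy])
  have hfsurj : Function.Surjective f := fun y => by
    obtain ⟨x, hx⟩ := hbfg.surjective y
    exact ⟨g x, hx⟩
  refine ⟨f, ⟨hfinj, hfsurj⟩, fun x x' => le_antisymm (hf x x') ?_⟩
  calc qdist x x' ≤ qdist ((g ∘ f) x) ((g ∘ f) x') :=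
        short_bij_expand (hg.comp hf) hbgf x x'
    _ ≤ qdist (f x) (f x') := hg _ _

end Aux

theorem stmt_7 {X Y M N : Type*} [QuasiMetric X] [QuasiMetric Y] [QuasiMetric M] [QuasiMetric N]
    [Finite X] [Finite Y] [Finite M] [Finite N] (r : ℝ) (hr : 0 ≤ r)
    (hM : RMinimal r M ∧ RHomotopyEquivalent r M X)
    (hN : RMinimal r N ∧ RHomotopyEquivalent r N Y) :
    RHomotopyEquivalent r X Y ↔ ∃ f : M → N, IsIsometry f := by
  obtain ⟨hMmin, hMX⟩ := hM
  obtain ⟨hNmin, hNY⟩ := hN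
  constructor
  · intro hXY
    exact min_equiv_isometry hMmin hNmin (hMX.trans' (hXY.trans' hNY.symm'))
  · rintro ⟨f, hf⟩
    exact (hMX.symm'.trans' (isometry_rhe hf)).trans' hNY
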